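/- c-extremization for twisted N=4 super Yang-Mills: Let N be a real number and 𝔫₁, 𝔫₂, 𝔫₃ real numbers with 𝔫₁+𝔫₂+𝔫₃ = 2 and Θ := 𝔫₁²+𝔫₂²+𝔫₃² − 2(𝔫₁𝔫₂+𝔫₁𝔫₃+𝔫₂𝔫₃) ≠ 0. Define c_r : ℝ² → ℝ by c_r(Δ₁,Δ₂) = −(3(N²−1)/π²)·[Δ₁Δ₂𝔫₃ + Δ₁Δ₃𝔫₂ + Δ₂Δ₃𝔫₁] where Δ₃ := 2π − Δ₁ − Δ₂. Then at the point Δ̄_a = 4π·𝔫_a(𝔫_a−1)/Θ (a = 1,2) both partial derivatives of c_r vanish, one has Δ̄₃ := 2π − Δ̄₁ − Δ̄₂ = 4π·𝔫₃(𝔫₃−1)/Θ, and the extremal value is c_r(Δ̄₁,Δ̄₂) = 12(N²−1)·𝔫₁𝔫₂𝔫₃/Θ. -/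

import Mathlib

open Real

lemma quad_deriv (a b c x : ℝ) :
    deriv (fun x : ℝ => a * x ^ 2 + b * x + c) x = 2 * a * x + b := by
  have h : HasDerivAt (fun x : ℝ => a * x ^ 2 + b * x + c) (2 * a * x + b) x := by
    have h1 : HasDerivAt (fun x : ℝ => x ^ 2) (2 * x) x := by
      simpa using hasDerivAt_pow 2 x
    have := ((h1.const_mul a).add ((hasDerivAt_id x).const_mul b)).add_const c
    refine this.congr_deriv ?_
    ring
  exact h.deriv

/-- c-extremization for twisted N=4 super Yang-Mills: the trial right-moving
central charge `c_r(Δ₁,Δ₂)` (with `Δ₃ = 2π − Δ₁ − Δ₂`) has vanishing partial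
derivatives at `Δ̄_a = 4π𝔫_a(𝔫_a−1)/Θ`, the third potential satisfies the same
formula, and the extremal value is `12(N²−1)𝔫₁𝔫₂𝔫₃/Θ`. -/
theorem stmt6 (N n1 n2 n3 : ℝ) (hsum : n1 + n2 + n3 = 2)
    (Θ : ℝ) (hΘ : Θ = n1 ^ 2 + n2 ^ 2 + n3 ^ 2 - 2 * (n1 * n2 + n1 * n3 + n2 * n3))
    (hΘ0 : Θ ≠ 0)
    (cr : ℝ → ℝ → ℝ)
    (hcr : ∀ Δ1 Δ2, cr Δ1 Δ2 = -(3 * (N ^ 2 - 1) / π ^ 2) *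
      (Δ1 * Δ2 * n3 + Δ1 * (2 * π - Δ1 - Δ2) * n2 + Δ2 * (2 * π - Δ1 - Δ2) * n1))
    (D1 D2 : ℝ) (hD1 : D1 = 4 * π * n1 * (n1 - 1) / Θ) (hD2 : D2 = 4 * π * n2 * (n2 - 1) / Θ) :
    deriv (fun x => cr x D2) D1 = 0 ∧
    deriv (fun y => cr D1 y) D2 = 0 ∧
    2 * π - D1 - D2 = 4 * π * n3 * (n3 - 1) / Θ ∧
    cr D1 D2 = 12 * (N ^ 2 - 1) * n1 * n2 * n3 / Θ := by
  have hπ : (π : ℝ) ≠ 0 := Real.pi_ne_zero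
  have h3 : n3 = 2 - n1 - n2 := by linarith
  subst h3
  subst hΘ
  set C : ℝ := -(3 * (N ^ 2 - 1) / π ^ 2) with hC
  refine ⟨?_, ?_, ?_, ?_⟩
  · have hf : (fun x => cr x D2) = fun x : ℝ =>
        (-(C * n2)) * x ^ 2 + (C * (D2 * (2 - n1 - n2) + 2 * π * n2 - D2 * n2 - D2 * n1)) * x
          + C * ((2 * π * D2 - D2 ^ 2) * n1) := by
      funext x; rw [hcr]; ring
    rw [hf, quad_deriv]
    rw [hD1, hD2]
    ring_nf at hΘ0 ⊢
    field_simp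
    ring
  · have hf : (fun y => cr D1 y) = fun y : ℝ =>
        (-(C * n1)) * y ^ 2 + (C * (D1 * (2 - n1 - n2) + 2 * π * n1 - D1 * n1 - D1 * n2)) * y
          + C * ((2 * π * D1 - D1 ^ 2) * n2) := by
      funext y; rw [hcr]; ring
    rw [hf, quad_deriv]
    rw [hD1, hD2]
    ring_nf at hΘ0 ⊢
    field_simp
    ring
  · rw [hD1, hD2]
    rw [eq_div_iff hΘ0]
    ring_nf at hΘ0 ⊢
    field_simp
    ring
  · rw [hcr, hD1, hD2, hC]
    rw [eq_div_iff hΘ0]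
    ring_nf at hΘ0 ⊢
    field_simp
    ring
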